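/- Two propositional formulas over m variables are logically equivalent (each derivable from the other in the Hilbert-style proof system) if and only if they have the same kernel. -/

import Mathlib

/-- Propositional formulas over `m` variables `X₁, …, X_m`. -/
inductive PropForm (m : ℕ) : Type
  | var : Fin m → PropForm m
  | not : PropForm m → PropForm m
  | and : PropForm m → PropForm m → PropForm m
  | or  : PropForm m → PropForm m → PropForm m
  | imp : PropForm m → PropForm m → PropForm m

namespace PropForm

/-- Truth-table evaluation of a formula under a valuation `v : Fin m → Bool`. -/
def eval {m : ℕ} (v : Fin m → Bool) : PropForm m → Bool
  | var i => v i
  | not s => !(eval v s)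
  | and s t => eval v s && eval v t
  | or s t => eval v s || eval v t
  | imp s t => !(eval v s) || eval v t

/-- The kernel `⟦s⟧` of a formula `s`: the set of valuations that satisfy it. -/
def kernel {m : ℕ} (s : PropForm m) : Set (Fin m → Bool) :=
  {v | eval v s = true}

/-- A standard complete set of axiom schemes for classical propositional logic
(Hilbert style), covering implication, negation, conjunction and disjunction. -/
inductive Ax {m : ℕ} : PropForm m → Prop
  | ax1 (s t : PropForm m) : Ax (s.imp (t.imp s))
  | ax2 (s t u : PropForm m) : Ax ((s.imp (t.imp u)).imp ((s.imp t).imp (s.imp u)))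
  | ax3 (s t : PropForm m) : Ax ((s.not.imp t.not).imp (t.imp s))
  | ax4 (s t : PropForm m) : Ax ((s.and t).imp s)
  | ax5 (s t : PropForm m) : Ax ((s.and t).imp t)
  | ax6 (s t : PropForm m) : Ax (s.imp (t.imp (s.and t)))
  | ax7 (s t : PropForm m) : Ax (s.imp (s.or t))
  | ax8 (s t : PropForm m) : Ax (t.imp (s.or t))
  | ax9 (s t u : PropForm m) : Ax ((s.imp u).imp ((t.imp u).imp ((s.or t).imp u)))

/-- Hilbert-style derivability `h ⊢ t`: `t` is derivable from the hypothesis `h`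
using the axiom schemes and modus ponens as the only inference rule. -/
inductive Derives {m : ℕ} (h : PropForm m) : PropForm m → Prop
  | ax {t : PropForm m} : Ax t → Derives h t
  | hyp : Derives h h
  | mp {s t : PropForm m} : Derives h (s.imp t) → Derives h s → Derives h t

end PropForm

set_option linter.dupNamespace false

namespace PropForm

variable {m : ℕ}

/-- Derivability from a set of hypotheses. -/
inductive Der (Γ : Set (PropForm m)) : PropForm m → Prop
  | ax {t} : Ax t → Der Γ t
  | hyp {t} : t ∈ Γ → Der Γ t
  | mp {s t} : Der Γ (s.imp t) → Der Γ s → Der Γ t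

theorem Der.weaken {Γ Δ : Set (PropForm m)} (h : Γ ⊆ Δ) {t : PropForm m}
    (d : Der Γ t) : Der Δ t := by
  induction d with
  | ax a => exact .ax a
  | hyp ht => exact .hyp (h ht)
  | mp _ _ ih1 ih2 => exact .mp ih1 ih2

theorem Der.idd (Γ : Set (PropForm m)) (A : PropForm m) : Der Γ (A.imp A) := by
  have h1 : Der Γ ((A.imp ((A.imp A).imp A)).imp ((A.imp (A.imp A)).imp (A.imp A))) :=
    .ax (Ax.ax2 A (A.imp A) A)
  exact .mp (.mp h1 (.ax (Ax.ax1 A (A.imp A)))) (.ax (Ax.ax1 A A))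

theorem Der.deduction {Γ : Set (PropForm m)} {A B : PropForm m}
    (h : Der (insert A Γ) B) : Der Γ (A.imp B) := by
  induction h with
  | ax a => exact .mp (.ax (Ax.ax1 _ A)) (.ax a)
  | @hyp t ht =>
      rcases ht with rfl | ht
      · exact Der.idd Γ _
      · exact .mp (.ax (Ax.ax1 _ A)) (.hyp ht)
  | mp _ _ ih1 ih2 => exact .mp (.mp (.ax (Ax.ax2 A _ _)) ih1) ih2

theorem Der.cut {Γ : Set (PropForm m)} {A B : PropForm m} (h1 : Der Γ A)
    (h2 : Der (insert A Γ) B) : Der Γ B :=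
  .mp h2.deduction h1

theorem Der.efq {Γ : Set (PropForm m)} {B C : PropForm m}
    (h1 : Der Γ B) (h2 : Der Γ B.not) : Der Γ C :=
  .mp (.mp (.ax (Ax.ax3 C B)) (.mp (.ax (Ax.ax1 B.not C.not)) h2)) h1

theorem Der.raa {Γ : Set (PropForm m)} {A B : PropForm m}
    (h1 : Der (insert A.not Γ) B) (h2 : Der (insert A.not Γ) B.not) : Der Γ A := by
  have hc : Der (insert A.not Γ) (A.imp A).not := Der.efq h1 h2
  exact .mp (.mp (.ax (Ax.ax3 A (A.imp A))) hc.deduction) (Der.idd Γ A)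

theorem Der.dne {Γ : Set (PropForm m)} {A : PropForm m} (h : Der Γ A.not.not) : Der Γ A :=
  Der.raa (.hyp (Set.mem_insert _ _)) (h.weaken (Set.subset_insert _ _))

theorem Der.raaN {Γ : Set (PropForm m)} {A B : PropForm m}
    (h1 : Der (insert A Γ) B) (h2 : Der (insert A Γ) B.not) : Der Γ A.not := by
  have hA : Der (insert A.not.not Γ) A := Der.dne (.hyp (Set.mem_insert _ _))
  have w : insert A Γ ⊆ insert A (insert A.not.not Γ) :=
    Set.insert_subset_insert (Set.subset_insert _ _)
  exact Der.raa (hA.cut (h1.weaken w)) (hA.cut (h2.weaken w))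

theorem Der.by_cases {Γ : Set (PropForm m)} {A B : PropForm m}
    (h1 : Der (insert A Γ) B) (h2 : Der (insert A.not Γ) B) : Der Γ B := by
  have hBn : Der (insert A (insert B.not Γ)) B.not :=
    .hyp (Set.mem_insert_of_mem _ (Set.mem_insert _ _))
  have wA : insert A Γ ⊆ insert A (insert B.not Γ) :=
    Set.insert_subset_insert (Set.subset_insert _ _)
  have hnA : Der (insert B.not Γ) A.not := Der.raaN (h1.weaken wA) hBn
  have wAn : insert A.not Γ ⊆ insert A.not (insert B.not Γ) :=
    Set.insert_subset_insert (Set.subset_insert _ _)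
  have hB : Der (insert B.not Γ) B := hnA.cut (h2.weaken wAn)
  exact Der.raa hB (.hyp (Set.mem_insert _ _))

/-- The literal determined by a valuation. -/
def lit (v : Fin m → Bool) (s : PropForm m) : PropForm m := if eval v s then s else s.not

theorem lit_pos {v : Fin m → Bool} {s : PropForm m} (h : eval v s = true) :
    lit v s = s := by simp [lit, h]

theorem lit_neg {v : Fin m → Bool} {s : PropForm m} (h : eval v s = false) :
    lit v s = s.not := by simp [lit, h]

theorem kalmar (v : Fin m → Bool) (Γ : Set (PropForm m))
    (hΓ : ∀ i : Fin m, lit v (var i) ∈ Γ) : ∀ φ : PropForm m, Der Γ (lit v φ) := by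
  intro φ
  induction φ with
  | var i => exact .hyp (hΓ i)
  | not s ih =>
      cases hs : eval v s with
      | true =>
          rw [lit_pos hs] at ih
          rw [lit_neg (show eval v s.not = false by simp [eval, hs])]
          exact Der.raaN (ih.weaken (Set.subset_insert _ _)) (.hyp (Set.mem_insert _ _))
      | false =>
          rw [lit_neg hs] at ih
          rw [lit_pos (show eval v s.not = true by simp [eval, hs])]
          exact ih
  | and s t ihs iht =>
      cases hs : eval v s with
      | true =>
          rw [lit_pos hs] at ihs
          cases ht : eval v t with
          | true =>
              rw [lit_pos ht] at iht
              rw [lit_pos (show eval v (s.and t) = true by simp [eval, hs, ht])]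
              exact .mp (.mp (.ax (Ax.ax6 s t)) ihs) iht
          | false =>
              rw [lit_neg ht] at iht
              rw [lit_neg (show eval v (s.and t) = false by simp [eval, hs, ht])]
              exact Der.raaN (.mp (.ax (Ax.ax5 s t)) (.hyp (Set.mem_insert _ _)))
                (iht.weaken (Set.subset_insert _ _))
      | false =>
          rw [lit_neg hs] at ihs
          rw [lit_neg (show eval v (s.and t) = false by simp [eval, hs])]
          exact Der.raaN (.mp (.ax (Ax.ax4 s t)) (.hyp (Set.mem_insert _ _)))
            (ihs.weaken (Set.subset_insert _ _))
  | or s t ihs iht =>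
      cases hs : eval v s with
      | true =>
          rw [lit_pos hs] at ihs
          rw [lit_pos (show eval v (s.or t) = true by simp [eval, hs])]
          exact .mp (.ax (Ax.ax7 s t)) ihs
      | false =>
          rw [lit_neg hs] at ihs
          cases ht : eval v t with
          | true =>
              rw [lit_pos ht] at iht
              rw [lit_pos (show eval v (s.or t) = true by simp [eval, hs, ht])]
              exact .mp (.ax (Ax.ax8 s t)) iht
          | false =>
              rw [lit_neg ht] at iht
              rw [lit_neg (show eval v (s.or t) = false by simp [eval, hs, ht])]
              have hts : Der (insert (s.or t) Γ) (t.imp s) := by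
                apply Der.deduction
                exact Der.efq (.hyp (Set.mem_insert _ _))
                  (iht.weaken ((Set.subset_insert _ _).trans (Set.subset_insert _ _)))
              have hsd : Der (insert (s.or t) Γ) s :=
                .mp (.mp (.mp (.ax (Ax.ax9 s t s)) (Der.idd _ s)) hts)
                  (.hyp (Set.mem_insert _ _))
              exact Der.raaN hsd (ihs.weaken (Set.subset_insert _ _))
  | imp s t ihs iht =>
      cases hs : eval v s with
      | false =>
          rw [lit_neg hs] at ihs
          rw [lit_pos (show eval v (s.imp t) = true by simp [eval, hs])]
          apply Der.deduction
          exact Der.efq (.hyp (Set.mem_insert _ _)) (ihs.weaken (Set.subset_insert _ _))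
      | true =>
          rw [lit_pos hs] at ihs
          cases ht : eval v t with
          | true =>
              rw [lit_pos ht] at iht
              rw [lit_pos (show eval v (s.imp t) = true by simp [eval, ht])]
              exact .mp (.ax (Ax.ax1 t s)) iht
          | false =>
              rw [lit_neg ht] at iht
              rw [lit_neg (show eval v (s.imp t) = false by simp [eval, hs, ht])]
              have hT : Der (insert (s.imp t) Γ) t :=
                .mp (.hyp (Set.mem_insert _ _)) (ihs.weaken (Set.subset_insert _ _))
              exact Der.raaN hT (iht.weaken (Set.subset_insert _ _))

/-- Context of the first `k` literals for `v`. -/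
def ctx (v : Fin m → Bool) (k : ℕ) : Set (PropForm m) :=
  {p | ∃ i : Fin m, i.val < k ∧ p = lit v (var i)}

theorem ctx_update (v : Fin m → Bool) (i : Fin m) (b : Bool) {k : ℕ} (hk : k ≤ i.val) :
    ctx (Function.update v i b) k = ctx v k := by
  have key : ∀ j : Fin m, j.val < k →
      lit (Function.update v i b) (var j) = lit v (var j) := by
    intro j hj
    have hji : j ≠ i := by
      intro h; subst h; omega
    have he : eval (Function.update v i b) (var j) = eval v (var j) := by
      simp only [eval]; exact Function.update_of_ne hji _ _
    unfold lit; rw [he]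
  ext p
  constructor
  · rintro ⟨j, hj, rfl⟩; exact ⟨j, hj, key j hj⟩
  · rintro ⟨j, hj, rfl⟩; exact ⟨j, hj, (key j hj).symm⟩

theorem ctx_succ (v : Fin m → Bool) {k : ℕ} (hk : k < m) :
    ctx v (k + 1) = insert (lit v (var ⟨k, hk⟩)) (ctx v k) := by
  ext p
  constructor
  · rintro ⟨j, hj, rfl⟩
    rcases Nat.lt_succ_iff_lt_or_eq.mp hj with h | h
    · exact Set.mem_insert_of_mem _ ⟨j, h, rfl⟩
    · left
      have : j = ⟨k, hk⟩ := Fin.ext h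
      rw [this]
  · rintro (rfl | ⟨j, hj, rfl⟩)
    · exact ⟨⟨k, hk⟩, Nat.lt_succ_self k, rfl⟩
    · exact ⟨j, Nat.lt_succ_of_lt hj, rfl⟩

theorem elim_aux (φ : PropForm m) (h : ∀ v, Der (ctx v m) φ) :
    ∀ (d : ℕ) (v : Fin m → Bool), Der (ctx v (m - d)) φ := by
  intro d
  induction d with
  | zero => simpa using h
  | succ d ih =>
      intro v
      by_cases hd : m ≤ d
      · have : m - (d + 1) = m - d := by omega
        rw [this]; exact ih v
      · push_neg at hd
        set k := m - (d + 1) with hkdef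
        have hkm : k < m := by omega
        have hsk : m - d = k + 1 := by omega
        set i : Fin m := ⟨k, hkm⟩ with hidef
        have hctx : ∀ b : Bool, ctx (Function.update v i b) k = ctx v k := fun b =>
          ctx_update v i b (le_refl _)
        have h1 : Der (insert (var i) (ctx v k)) φ := by
          have hh := ih (Function.update v i true)
          rw [hsk, ctx_succ _ hkm, hctx] at hh
          have : lit (Function.update v i true) (var i) = var i := by
            apply lit_pos; simp [eval, Function.update_self]
          rwa [this] at hh
        have h0 : Der (insert (var i).not (ctx v k)) φ := by
          have hh := ih (Function.update v i false)
          rw [hsk, ctx_succ _ hkm, hctx] at hh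
          have : lit (Function.update v i false) (var i) = (var i).not := by
            apply lit_neg; simp [eval, Function.update_self]
          rwa [this] at hh
        exact Der.by_cases h1 h0

theorem complete (φ : PropForm m) (h : ∀ v, eval v φ = true) (Γ : Set (PropForm m)) :
    Der Γ φ := by
  have h1 : ∀ v, Der (ctx v m) φ := by
    intro v
    have hk := kalmar v (ctx v m) (fun i => ⟨i, i.isLt, rfl⟩) φ
    rwa [lit_pos (h v)] at hk
  have h0 : Der (ctx (fun _ => false) (m - m)) φ := elim_aux φ h1 m _
  rw [Nat.sub_self] at h0
  apply h0.weaken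
  rintro p ⟨j, hj, rfl⟩
  omega

theorem ax_sound {v : Fin m → Bool} {t : PropForm m} (h : Ax t) : eval v t = true := by
  cases h <;> simp only [eval] <;>
    first
      | (rename_i s t u; cases eval v s <;> cases eval v t <;> cases eval v u <;> simp)
      | (rename_i s t; cases eval v s <;> cases eval v t <;> simp)

theorem sound {Γ : Set (PropForm m)} {t : PropForm m} (d : Der Γ t) (v : Fin m → Bool)
    (hΓ : ∀ p ∈ Γ, eval v p = true) : eval v t = true := by
  induction d with
  | ax a => exact ax_sound a
  | hyp ht => exact hΓ _ ht
  | mp _ _ ih1 ih2 =>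
      simp only [eval, ih2, Bool.not_true, Bool.false_or] at ih1
      exact ih1

theorem derives_iff {h t : PropForm m} : Derives h t ↔ Der {h} t := by
  constructor
  · intro d
    induction d with
    | ax a => exact .ax a
    | hyp => exact .hyp rfl
    | mp _ _ ih1 ih2 => exact .mp ih1 ih2
  · intro d
    induction d with
    | ax a => exact .ax a
    | hyp ht => cases ht; exact .hyp
    | mp _ _ ih1 ih2 => exact .mp ih1 ih2

end PropForm


/-- two formulas are logically equivalent (inter-derivable) iff they
have the same kernel. -/
theorem equivalent_iff_kernel_eq {m : ℕ} (s t : PropForm m) :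
    (PropForm.Derives s t ∧ PropForm.Derives t s) ↔
      PropForm.kernel s = PropForm.kernel t := by
  constructor
  · rintro ⟨hst, hts⟩
    ext v
    simp only [PropForm.kernel, Set.mem_setOf_eq]
    constructor
    · intro hs
      exact PropForm.sound (PropForm.derives_iff.mp hst) v (by rintro p rfl; exact hs)
    · intro ht
      exact PropForm.sound (PropForm.derives_iff.mp hts) v (by rintro p rfl; exact ht)
  · intro hker
    have he : ∀ v, PropForm.eval v s = PropForm.eval v t := by
      intro v
      have h := Set.ext_iff.mp hker v
      simp only [PropForm.kernel, Set.mem_setOf_eq] at h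
      cases hs : PropForm.eval v s <;> cases ht : PropForm.eval v t <;> simp_all
    constructor
    · have htaut : ∀ v, PropForm.eval v (s.imp t) = true := by
        intro v; simp [PropForm.eval, he v]
      have hd : PropForm.Der {s} (s.imp t) := PropForm.complete _ htaut _
      exact PropForm.derives_iff.mpr (.mp hd (.hyp rfl))
    · have htaut : ∀ v, PropForm.eval v (t.imp s) = true := by
        intro v; simp [PropForm.eval, he v]
      have hd : PropForm.Der {t} (t.imp s) := PropForm.complete _ htaut _
      exact PropForm.derives_iff.mpr (.mp hd (.hyp rfl))
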